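/- Let {P_t}_{t∈T} be a Markov semigroup on a Polish space (X, ρ) with T = [0,∞) which is Feller and strongly continuous on C_b(X). If {P_t} satisfies the eventual e-property at every point z ∈ X, then {P_t} satisfies the e-property at every point z ∈ X. -/

import Mathlib

open MeasureTheory Filter Topology Metric ENNReal
open scoped Classical

noncomputable section

variable {X : Type*}

/-- A bounded Lipschitz real-valued function. -/
def BddLip [PseudoMetricSpace X] (f : X → ℝ) : Prop :=
  (∃ K, LipschitzWith K f) ∧ ∃ C, ∀ x, |f x| ≤ C

/-- The topological support of a Borel measure:
`{x : μ(B(x,ε)) > 0 for every ε > 0}`. -/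
def msupp [PseudoMetricSpace X] [MeasurableSpace X] (μ : Measure X) : Set X :=
  {x | ∀ ε > 0, 0 < μ (Metric.ball x ε)}

/-! ### Discrete time `T = ℕ₊` -/

/-- Action of a transition kernel family on bounded Borel functions:
`P_n f (x) = ∫ f(y) P_n(x,dy)`. -/
def PfN [MeasurableSpace X] (P : ℕ → X → Measure X) (n : ℕ) (f : X → ℝ) (x : X) : ℝ :=
  ∫ y, f y ∂ P n x

/-- A Markov semigroup indexed by `T = ℕ₊ = {1,2,...}`. -/
def IsMarkovSemigroupN [MeasurableSpace X] (P : ℕ → X → Measure X) : Prop :=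
  (∀ n x, 1 ≤ n → IsProbabilityMeasure (P n x)) ∧
  (∀ (n : ℕ) (A : Set X), 1 ≤ n → MeasurableSet A → Measurable fun x => P n x A) ∧
  ∀ (m n : ℕ) (x : X) (A : Set X), 1 ≤ m → 1 ≤ n → MeasurableSet A →
    P (m + n) x A = ∫⁻ y, P n y A ∂ P m x

/-- The Feller property: each `P_n` maps bounded continuous functions to
bounded continuous functions. -/
def FellerN [MeasurableSpace X] [PseudoMetricSpace X] (P : ℕ → X → Measure X) : Prop :=
  ∀ n, 1 ≤ n → ∀ f : X → ℝ, Continuous f → (∃ C, ∀ x, |f x| ≤ C) →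
    Continuous (fun x => PfN P n f x) ∧ ∃ C, ∀ x, |PfN P n f x| ≤ C

/-- The e-property at a point `z`. -/
def EPropN [MeasurableSpace X] [PseudoMetricSpace X] (P : ℕ → X → Measure X) (z : X) : Prop :=
  ∀ f : X → ℝ, BddLip f → ∀ ε > 0, ∃ δ > 0, ∀ x, dist x z < δ → ∀ n, 1 ≤ n →
    |PfN P n f x - PfN P n f z| < ε

/-- The eventual e-property at a point `z`. -/
def EventualEPropN [MeasurableSpace X] [PseudoMetricSpace X] (P : ℕ → X → Measure X)
    (z : X) : Prop :=
  ∀ f : X → ℝ, BddLip f → ∀ ε > 0, ∃ δ > 0, ∃ n₀ : ℕ, 1 ≤ n₀ ∧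
    ∀ x, dist x z < δ → ∀ n, n₀ ≤ n → |PfN P n f x - PfN P n f z| < ε

/-- Eventual continuity (asymptotic equicontinuity) at a point `z`. -/
def EvContN [MeasurableSpace X] [PseudoMetricSpace X] (P : ℕ → X → Measure X) (z : X) : Prop :=
  ∀ f : X → ℝ, BddLip f → ∀ ε > 0, ∃ δ > 0, ∀ x, dist x z < δ →
    Filter.limsup (fun n => |PfN P n f x - PfN P n f z|) Filter.atTop ≤ ε

/-- Invariance of a measure: `P_n μ = μ` for all `n ∈ ℕ₊`. -/
def InvariantN [MeasurableSpace X] (P : ℕ → X → Measure X) (μ : Measure X) : Prop :=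
  ∀ n, 1 ≤ n → μ.bind (P n) = μ

/-- `μ` is an ergodic invariant measure: it is invariant and every Borel set `A`
with `P_n 1_A = 1_A` μ-a.e. for all `n` has `μ(A) ∈ {0,1}`. -/
def ErgodicMeasN [MeasurableSpace X] (P : ℕ → X → Measure X) (μ : Measure X) : Prop :=
  InvariantN P μ ∧
  ∀ A : Set X, MeasurableSet A →
    (∀ n, 1 ≤ n → ∀ᵐ x ∂μ, P n x A = A.indicator (fun _ => (1 : ℝ≥0∞)) x) →
    μ A = 0 ∨ μ A = 1

/-- Cesàro averages acting on functions: `Q_n f(x) = (1/n) ∑_{k=1}^n P_k f(x)`. -/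
def QfN [MeasurableSpace X] (P : ℕ → X → Measure X) (n : ℕ) (f : X → ℝ) (x : X) : ℝ :=
  (1 / (n : ℝ)) * ∑ k ∈ Finset.Icc 1 n, PfN P k f x

/-- Cesàro averages on sets: `Q_n(x,A) = (1/n) ∑_{k=1}^n P_k(x,A)`. -/
def QsetN [MeasurableSpace X] (P : ℕ → X → Measure X) (n : ℕ) (x : X) (A : Set X) : ℝ≥0∞ :=
  (n : ℝ≥0∞)⁻¹ * ∑ k ∈ Finset.Icc 1 n, P k x A

/-- Asymptotic stability with unique invariant measure `μs`. -/
def AsympStableN [MeasurableSpace X] [PseudoMetricSpace X] (P : ℕ → X → Measure X)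
    (μs : Measure X) : Prop :=
  IsProbabilityMeasure μs ∧ InvariantN P μs ∧
  (∀ ν : Measure X, IsProbabilityMeasure ν → InvariantN P ν → ν = μs) ∧
  ∀ ν : Measure X, IsProbabilityMeasure ν → ∀ f : X → ℝ, Continuous f →
    (∃ C, ∀ x, |f x| ≤ C) →
    Tendsto (fun n => ∫ y, f y ∂ (ν.bind (P n))) atTop (𝓝 (∫ y, f y ∂ μs))

/-! ### Continuous time `T = [0,∞)` -/

/-- Action on bounded Borel functions, continuous time. -/
def PfR [MeasurableSpace X] (P : ℝ → X → Measure X) (t : ℝ) (f : X → ℝ) (x : X) : ℝ :=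
  ∫ y, f y ∂ P t x

/-- A Markov semigroup indexed by `T = [0,∞)`, with `P_0(x,·) = δ_x`. -/
def IsMarkovSemigroupR [MeasurableSpace X] (P : ℝ → X → Measure X) : Prop :=
  (∀ t x, 0 ≤ t → IsProbabilityMeasure (P t x)) ∧
  (∀ (t : ℝ) (A : Set X), 0 ≤ t → MeasurableSet A → Measurable fun x => P t x A) ∧
  (∀ x, P 0 x = Measure.dirac x) ∧
  ∀ (s t : ℝ) (x : X) (A : Set X), 0 ≤ s → 0 ≤ t → MeasurableSet A →
    P (s + t) x A = ∫⁻ y, P t y A ∂ P s x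

/-- Joint time-measurability: `s ↦ P_s(x,A)` is Borel measurable. -/
def TimeMeasR [MeasurableSpace X] (P : ℝ → X → Measure X) : Prop :=
  ∀ (x : X) (A : Set X), MeasurableSet A → Measurable fun s : ℝ => P s x A

/-- The Feller property, continuous time. -/
def FellerR [MeasurableSpace X] [PseudoMetricSpace X] (P : ℝ → X → Measure X) : Prop :=
  ∀ t : ℝ, 0 ≤ t → ∀ f : X → ℝ, Continuous f → (∃ C, ∀ x, |f x| ≤ C) →
    Continuous (fun x => PfR P t f x) ∧ ∃ C, ∀ x, |PfR P t f x| ≤ C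

/-- Strong continuity on `C_b(X)`: `sup_x |P_t f(x) - f(x)| → 0` as `t ↓ 0`. -/
def StrongContR [MeasurableSpace X] [PseudoMetricSpace X] (P : ℝ → X → Measure X) : Prop :=
  ∀ f : X → ℝ, Continuous f → (∃ C, ∀ x, |f x| ≤ C) →
    ∀ ε > 0, ∃ η > 0, ∀ t : ℝ, 0 < t → t < η → ∀ x, |PfR P t f x - f x| < ε

/-- The e-property at a point `z`, continuous time. -/
def EPropR [MeasurableSpace X] [PseudoMetricSpace X] (P : ℝ → X → Measure X) (z : X) : Prop :=
  ∀ f : X → ℝ, BddLip f → ∀ ε > 0, ∃ δ > 0, ∀ x, dist x z < δ → ∀ t : ℝ, 0 ≤ t →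
    |PfR P t f x - PfR P t f z| < ε

/-- The eventual e-property at a point `z`, continuous time. -/
def EventualEPropR [MeasurableSpace X] [PseudoMetricSpace X] (P : ℝ → X → Measure X)
    (z : X) : Prop :=
  ∀ f : X → ℝ, BddLip f → ∀ ε > 0, ∃ δ > 0, ∃ t₀ : ℝ, 0 ≤ t₀ ∧
    ∀ x, dist x z < δ → ∀ t : ℝ, t₀ ≤ t → |PfR P t f x - PfR P t f z| < ε

/-- Eventual continuity at `z`, continuous time. -/
def EvContR [MeasurableSpace X] [PseudoMetricSpace X] (P : ℝ → X → Measure X) (z : X) : Prop :=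
  ∀ f : X → ℝ, BddLip f → ∀ ε > 0, ∃ δ > 0, ∀ x, dist x z < δ →
    Filter.limsup (fun t : ℝ => |PfR P t f x - PfR P t f z|) Filter.atTop ≤ ε

/-- Invariance, continuous time. -/
def InvariantR [MeasurableSpace X] (P : ℝ → X → Measure X) (μ : Measure X) : Prop :=
  ∀ t : ℝ, 0 ≤ t → μ.bind (P t) = μ

/-- Ergodic invariant measure, continuous time. -/
def ErgodicMeasR [MeasurableSpace X] (P : ℝ → X → Measure X) (μ : Measure X) : Prop :=
  InvariantR P μ ∧
  ∀ A : Set X, MeasurableSet A →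
    (∀ t : ℝ, 0 ≤ t → ∀ᵐ x ∂μ, P t x A = A.indicator (fun _ => (1 : ℝ≥0∞)) x) →
    μ A = 0 ∨ μ A = 1

/-- Cesàro averages acting on functions: `Q_t f(x) = (1/t) ∫_0^t P_s f(x) ds`. -/
def QfR [MeasurableSpace X] (P : ℝ → X → Measure X) (t : ℝ) (f : X → ℝ) (x : X) : ℝ :=
  (1 / t) * ∫ s in Set.Ioc (0 : ℝ) t, PfR P s f x

/-- Cesàro averages on sets: `Q_t(x,A) = (1/t) ∫_0^t P_s(x,A) ds`. -/
def QsetR [MeasurableSpace X] (P : ℝ → X → Measure X) (t : ℝ) (x : X) (A : Set X) : ℝ≥0∞ :=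
  ENNReal.ofReal (1 / t) * ∫⁻ s in Set.Ioc (0 : ℝ) t, P s x A

/-- Asymptotic stability, continuous time. -/
def AsympStableR [MeasurableSpace X] [PseudoMetricSpace X] (P : ℝ → X → Measure X)
    (μs : Measure X) : Prop :=
  IsProbabilityMeasure μs ∧ InvariantR P μs ∧
  (∀ ν : Measure X, IsProbabilityMeasure ν → InvariantR P ν → ν = μs) ∧
  ∀ ν : Measure X, IsProbabilityMeasure ν → ∀ f : X → ℝ, Continuous f →
    (∃ C, ∀ x, |f x| ≤ C) →
    Tendsto (fun t : ℝ => ∫ y, f y ∂ (ν.bind (P t))) atTop (𝓝 (∫ y, f y ∂ μs))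

end
section helpers

open MeasureTheory

variable {X : Type*} [MeasurableSpace X]

lemma myIntegrable {μ : Measure X} [IsFiniteMeasure μ]
    {g : X → ℝ} (hg : AEStronglyMeasurable g μ) {C : ℝ} (hC : ∀ x, |g x| ≤ C) :
    Integrable g μ :=
  Integrable.mono' (integrable_const C) hg (ae_of_all _ hC)

lemma myIntegralBind {m : X → Measure X} (hm : Measurable m)
    (hprob : ∀ x, IsProbabilityMeasure (m x)) (ν : Measure X) [IsProbabilityMeasure ν]
    {g : X → ℝ} (hgm : Measurable g) {C : ℝ} (hC : ∀ x, |g x| ≤ C) :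
    ∫ y, g y ∂(ν.bind m) = ∫ x, ∫ y, g y ∂(m x) ∂ν := by
  have hbindprob : IsProbabilityMeasure (ν.bind m) := by
    constructor
    rw [Measure.bind_apply MeasurableSet.univ hm.aemeasurable]
    simp [fun x => (hprob x).measure_univ]
  have hgC : ∀ x, g x ≤ |C| := fun x => ((abs_le.mp (hC x)).2).trans (le_abs_self C)
  have hgC' : ∀ x, -g x ≤ |C| := fun x =>
    (neg_le.mpr (abs_le.mp (hC x)).1).trans (le_abs_self C)
  -- key computation for a single nonnegative part
  have main : ∀ h : X → ℝ, Measurable h → (∀ x, h x ≤ |C|) →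
      ∫ x, (∫⁻ y, ENNReal.ofReal (h y) ∂(m x)).toReal ∂ν
        = (∫⁻ y, ENNReal.ofReal (h y) ∂(ν.bind m)).toReal := by
    intro h hh hhC
    have hmh : Measurable fun y => ENNReal.ofReal (h y) := ENNReal.measurable_ofReal.comp hh
    have hA : Measurable fun x => ∫⁻ y, ENNReal.ofReal (h y) ∂(m x) :=
      (Measure.measurable_lintegral hmh).comp hm
    have hbd : ∀ x, (∫⁻ y, ENNReal.ofReal (h y) ∂(m x)) ≤ ENNReal.ofReal |C| := by
      intro x
      calc ∫⁻ y, ENNReal.ofReal (h y) ∂(m x)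
          ≤ ∫⁻ _, ENNReal.ofReal |C| ∂(m x) :=
            lintegral_mono fun y => ENNReal.ofReal_le_ofReal (hhC y)
        _ = ENNReal.ofReal |C| := by
            simp [lintegral_const, (hprob x).measure_univ]
    rw [Measure.lintegral_bind hm.aemeasurable hmh.aemeasurable,
      ← integral_toReal hA.aemeasurable
        (ae_of_all _ fun x => lt_of_le_of_lt (hbd x) ENNReal.ofReal_lt_top)]
  -- integrability facts
  have hint : ∀ (μ : Measure X), IsProbabilityMeasure μ → Integrable g μ := by
    intro μ hμ
    exact myIntegrable hgm.aestronglyMeasurable hC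
  have hboundToReal : ∀ (h : X → ℝ), Measurable h → (∀ x, h x ≤ |C|) →
      Integrable (fun x => (∫⁻ y, ENNReal.ofReal (h y) ∂(m x)).toReal) ν := by
    intro h hh hhC
    have hmh : Measurable fun y => ENNReal.ofReal (h y) := ENNReal.measurable_ofReal.comp hh
    have hA : Measurable fun x => ∫⁻ y, ENNReal.ofReal (h y) ∂(m x) :=
      (Measure.measurable_lintegral hmh).comp hm
    refine myIntegrable (Measurable.aestronglyMeasurable ?_) (C := |C|) ?_
    · exact ENNReal.measurable_toReal.comp hA
    · intro x
      rw [abs_of_nonneg ENNReal.toReal_nonneg]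
      refine ENNReal.toReal_le_of_le_ofReal (abs_nonneg C) ?_
      calc ∫⁻ y, ENNReal.ofReal (h y) ∂(m x)
          ≤ ∫⁻ _, ENNReal.ofReal |C| ∂(m x) :=
            lintegral_mono fun y => ENNReal.ofReal_le_ofReal (hhC y)
        _ = ENNReal.ofReal |C| := by simp [lintegral_const, (hprob x).measure_univ]
  calc ∫ y, g y ∂(ν.bind m)
      = (∫⁻ y, ENNReal.ofReal (g y) ∂(ν.bind m)).toReal
        - (∫⁻ y, ENNReal.ofReal (-g y) ∂(ν.bind m)).toReal :=
        integral_eq_lintegral_pos_part_sub_lintegral_neg_part (hint _ hbindprob)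
    _ = ∫ x, (∫⁻ y, ENNReal.ofReal (g y) ∂(m x)).toReal ∂ν
        - ∫ x, (∫⁻ y, ENNReal.ofReal (-g y) ∂(m x)).toReal ∂ν := by
        rw [main g hgm hgC, main (fun y => -g y) hgm.neg hgC']
    _ = ∫ x, ((∫⁻ y, ENNReal.ofReal (g y) ∂(m x)).toReal
        - (∫⁻ y, ENNReal.ofReal (-g y) ∂(m x)).toReal) ∂ν :=
        (integral_sub (hboundToReal g hgm hgC) (hboundToReal _ hgm.neg hgC')).symm
    _ = ∫ x, ∫ y, g y ∂(m x) ∂ν := by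
        refine integral_congr_ae (ae_of_all _ fun x => ?_)
        exact (integral_eq_lintegral_pos_part_sub_lintegral_neg_part (hint _ (hprob x))).symm

end helpers
/-- For `T = [0,∞)`, if a Markov semigroup on a Polish space is Feller,
strongly continuous on `C_b(X)`, and satisfies the eventual e-property at every point,
then it satisfies the e-property at every point. -/
theorem stmt2 {X : Type*} [MetricSpace X] [CompleteSpace X]
    [TopologicalSpace.SeparableSpace X] [MeasurableSpace X] [BorelSpace X]
    (P : ℝ → X → Measure X) (hP : IsMarkovSemigroupR P) (hFeller : FellerR P)
    (hsc : StrongContR P) (he : ∀ z : X, EventualEPropR P z) :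
    ∀ z : X, EPropR P z := by
  obtain ⟨hprob, hmeasA, hzero, hsemi⟩ := hP
  intro z f hf ε hε
  obtain ⟨⟨K, hLip⟩, C, hC⟩ := hf
  have hfc : Continuous f := hLip.continuous
  have hfm : Measurable f := hfc.measurable
  obtain ⟨η, hη, hsc3⟩ := hsc f hfc ⟨C, hC⟩ (ε / 3) (by positivity)
  obtain ⟨δ₁, hδ₁, t₀, ht₀, hev⟩ := he z f ⟨⟨K, hLip⟩, C, hC⟩ ε hε
  set h : ℝ := η / 2 with hh
  have hhpos : 0 < h := by positivity
  set N : ℕ := Nat.ceil (t₀ / h) with hN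
  -- Feller continuity at the grid points
  have hgrid : ∀ k : ℕ, ∃ d > 0, ∀ x, dist x z < d →
      |PfR P ((k : ℝ) * h) f x - PfR P ((k : ℝ) * h) f z| < ε / 3 := by
    intro k
    have hk : (0 : ℝ) ≤ (k : ℝ) * h := by positivity
    obtain ⟨hcont, -⟩ := hFeller ((k : ℝ) * h) hk f hfc ⟨C, hC⟩
    obtain ⟨d, hd, hdd⟩ := Metric.continuous_iff.mp hcont z (ε / 3) (by positivity)
    exact ⟨d, hd, fun x hx => by simpa [Real.dist_eq] using hdd x hx⟩
  choose d hd hdd using hgrid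
  have hne : ((Finset.range (N + 1)) : Finset ℕ).Nonempty :=
    ⟨0, Finset.mem_range.mpr (Nat.succ_pos N)⟩
  set δ₂ : ℝ := (Finset.range (N + 1)).inf' hne d with hδ₂def
  have hδ₂pos : 0 < δ₂ := by
    rw [hδ₂def, Finset.lt_inf'_iff]
    exact fun k _ => hd k
  refine ⟨min δ₁ δ₂, lt_min hδ₁ hδ₂pos, ?_⟩
  intro x hx t ht
  by_cases hcase : t₀ ≤ t
  · exact hev x (hx.trans_le (min_le_left _ _)) t hcase
  · push_neg at hcase
    set k : ℕ := Nat.floor (t / h) with hkdef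
    have hth : (k : ℝ) ≤ t / h := Nat.floor_le (div_nonneg ht hhpos.le)
    have hs_le : (k : ℝ) * h ≤ t := by
      calc (k : ℝ) * h ≤ (t / h) * h := mul_le_mul_of_nonneg_right hth hhpos.le
        _ = t := div_mul_cancel₀ t hhpos.ne'
    have ht_lt : t < ((k : ℝ) + 1) * h := by
      have h1 : t / h < (k : ℝ) + 1 := Nat.lt_floor_add_one (t / h)
      calc t = (t / h) * h := (div_mul_cancel₀ t hhpos.ne').symm
        _ < ((k : ℝ) + 1) * h := mul_lt_mul_of_pos_right h1 hhpos
    have hkN : k ≤ N := by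
      have hdivlt : t / h < t₀ / h := by gcongr
      have h2 : (k : ℝ) < (N : ℝ) :=
        lt_of_le_of_lt hth (lt_of_lt_of_le hdivlt (Nat.le_ceil _))
      exact le_of_lt (by exact_mod_cast h2)
    have hδ₂k : δ₂ ≤ d k :=
      Finset.inf'_le d (Finset.mem_range.mpr (Nat.lt_succ_of_le hkN))
    have hmid : |PfR P ((k : ℝ) * h) f x - PfR P ((k : ℝ) * h) f z| < ε / 3 :=
      hdd k x (lt_of_lt_of_le hx ((min_le_right _ _).trans hδ₂k))
    set u : ℝ := t - (k : ℝ) * h with hudef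
    have hu0 : 0 ≤ u := by simp only [hudef]; linarith
    have huh : u < η := by
      have hexp : ((k : ℝ) + 1) * h = (k : ℝ) * h + h := by ring
      have hlt : u < h := by simp only [hudef]; linarith [ht_lt, hexp.symm.le]
      have : h < η := by rw [hh]; linarith
      linarith
    by_cases hu : u = 0
    · have ht_eq : t = (k : ℝ) * h := by
        have h0 : t - (k : ℝ) * h = 0 := hu
        linarith
      rw [ht_eq]
      linarith [hmid]
    · have hupos : 0 < u := lt_of_le_of_ne hu0 (Ne.symm hu)
      have hs0 : (0 : ℝ) ≤ (k : ℝ) * h := by positivity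
      have hmPu : Measurable (P u) :=
        Measure.measurable_of_measurable_coe _ fun A hA => hmeasA u A hu0 hA
      have hbind : ∀ w, P t w = ((P ((k : ℝ) * h) w).bind (P u)) := by
        intro w
        refine Measure.ext fun A hA => ?_
        rw [Measure.bind_apply hA hmPu.aemeasurable]
        have hsg := hsemi ((k : ℝ) * h) u w A hs0 hu0 hA
        have hteq : (k : ℝ) * h + u = t := by simp only [hudef]; ring
        rw [hteq] at hsg
        exact hsg
      have hPprob : ∀ w, IsProbabilityMeasure (P ((k : ℝ) * h) w) :=
        fun w => hprob _ w hs0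
      have hprobu : ∀ y, IsProbabilityMeasure (P u y) := fun y => hprob u y hu0
      have key : ∀ w, PfR P t f w = ∫ y, PfR P u f y ∂ (P ((k : ℝ) * h) w) := by
        intro w
        haveI := hPprob w
        calc PfR P t f w = ∫ y, f y ∂ ((P ((k : ℝ) * h) w).bind (P u)) := by
              rw [PfR, hbind w]
          _ = ∫ y, ∫ v, f v ∂ (P u y) ∂ (P ((k : ℝ) * h) w) :=
              myIntegralBind hmPu hprobu _ hfm hC
          _ = ∫ y, PfR P u f y ∂ (P ((k : ℝ) * h) w) := rfl
      obtain ⟨hcontu, Cu, hCu⟩ := hFeller u hu0 f hfc ⟨C, hC⟩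
      have hdiff : ∀ w, |PfR P t f w - PfR P ((k : ℝ) * h) f w| ≤ ε / 3 := by
        intro w
        haveI := hPprob w
        have hint1 : Integrable (fun y => PfR P u f y) (P ((k : ℝ) * h) w) :=
          myIntegrable hcontu.measurable.aestronglyMeasurable hCu
        have hint2 : Integrable f (P ((k : ℝ) * h) w) :=
          myIntegrable hfm.aestronglyMeasurable hC
        rw [key w]
        have hPsr : PfR P ((k : ℝ) * h) f w = ∫ y, f y ∂ (P ((k : ℝ) * h) w) := rfl
        rw [hPsr, ← integral_sub hint1 hint2]
        calc |∫ y, (PfR P u f y - f y) ∂ (P ((k : ℝ) * h) w)|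
            ≤ ∫ y, |PfR P u f y - f y| ∂ (P ((k : ℝ) * h) w) :=
              by simpa [Real.norm_eq_abs] using
                norm_integral_le_integral_norm (μ := P ((k : ℝ) * h) w)
                  (fun y => PfR P u f y - f y)
          _ ≤ ∫ _, (ε / 3) ∂ (P ((k : ℝ) * h) w) :=
              integral_mono (hint1.sub hint2).abs (integrable_const _)
                (fun y => le_of_lt (hsc3 u hupos huh y))
          _ = ε / 3 := by simp [measure_univ]
      have hcomb :
          |PfR P t f x - PfR P t f z|
            ≤ |PfR P t f x - PfR P ((k : ℝ) * h) f x|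
              + (|PfR P ((k : ℝ) * h) f x - PfR P ((k : ℝ) * h) f z|
                + |PfR P ((k : ℝ) * h) f z - PfR P t f z|) := by
        calc |PfR P t f x - PfR P t f z|
            ≤ |PfR P t f x - PfR P ((k : ℝ) * h) f x|
              + |PfR P ((k : ℝ) * h) f x - PfR P t f z| := abs_sub_le _ _ _
          _ ≤ _ := by gcongr; exact abs_sub_le _ _ _
      have h3 : |PfR P ((k : ℝ) * h) f z - PfR P t f z| ≤ ε / 3 := by
        rw [abs_sub_comm]; exact hdiff z
      linarith [hdiff x, hmid, h3, hcomb]
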